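/- In the equal-curvature quadratic setting with β ∈ (1/2, 1], if the user preference satisfies 1−β ≤ μ ≤ β, then taking λ = (μ+β−1)/(2β−1) ∈ [0,1] yields exact recovery of the user optimum: θ(λ) = θ̂_μ; consequently the interpolated family is exactly optimal, i.e., the maximum over λ ∈ [0,1] of R_μ(θ(λ)) equals R_μ(θ̂_μ). -/

import Mathlib

/-- In the equal-curvature quadratic setting with `β ∈ (1/2, 1]`, if `1−β ≤ μ ≤ β`, then
`λ = (μ+β−1)/(2β−1) ∈ [0,1]` yields exact recovery of the user optimum, `θ(λ) = θ̂_μ`;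
consequently the interpolated family is exactly optimal:
`max_{λ∈[0,1]} R_μ(θ(λ)) = R_μ(θ̂_μ)`. -/
theorem equal_curvature_exact_recovery
    {F : Type*} [NormedAddCommGroup F] [InnerProductSpace ℝ F]
    (θadv θreal : F) (Cadv Creal η : ℝ) (hη : 0 < η)
    (R_adv R_real : F → ℝ)
    (hRadv : R_adv = fun θ => Cadv - (η / 2) * ‖θ - θadv‖ ^ 2)
    (hRreal : R_real = fun θ => Creal - (η / 2) * ‖θ - θreal‖ ^ 2)
    (β μ : ℝ) (hβ : β ∈ Set.Ioc (1 / 2 : ℝ) 1) (hμ : μ ∈ Set.Icc (0 : ℝ) 1)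
    (hrange : 1 - β ≤ μ ∧ μ ≤ β)
    (Rμ : F → ℝ) (hRμ : Rμ = fun θ => μ * R_adv θ + (1 - μ) * R_real θ)
    (θ₁ θ₂ θhat : F)
    (hθ₁ : θ₁ = β • θadv + (1 - β) • θreal)
    (hθ₂ : θ₂ = (1 - β) • θadv + β • θreal)
    (hθhat : θhat = μ • θadv + (1 - μ) • θreal)
    (Θ : ℝ → F) (hΘ : Θ = fun l => (1 - l) • θ₂ + l • θ₁)
    (l : ℝ) (hl : l = (μ + β - 1) / (2 * β - 1)) :
    l ∈ Set.Icc (0 : ℝ) 1 ∧ Θ l = θhat ∧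
      IsGreatest ((fun t => Rμ (Θ t)) '' Set.Icc (0 : ℝ) 1) (Rμ θhat) := by

  obtain ⟨hβ1, hβ2⟩ := hβ
  obtain ⟨hr1, hr2⟩ := hrange
  have h2β : (0:ℝ) < 2*β - 1 := by linarith
  have hl' : l * (2*β-1) = μ + β - 1 := by
    rw [hl]; exact div_mul_cancel₀ _ h2β.ne'
  have hlmem : l ∈ Set.Icc (0:ℝ) 1 := by
    constructor
    · rw [hl]; exact div_nonneg (by linarith) h2β.le
    · rw [hl, div_le_one h2β]; linarith
  have hΘl : Θ l = θhat := by
    rw [hΘ, hθ₁, hθ₂, hθhat]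
    simp only
    have e1 : (1-l)*(1-β)+l*β = μ := by linear_combination hl'
    have e2 : (1-l)*β+l*(1-β) = 1-μ := by linear_combination (-1 : ℝ) * hl'
    have : (1-l)•((1-β)•θadv + β•θreal) + l•(β•θadv+(1-β)•θreal)
       = ((1-l)*(1-β)+l*β)•θadv + ((1-l)*β+l*(1-β))•θreal := by module
    rw [this, e1, e2]
  have key : ∀ θ : F, Rμ θ = Rμ θhat - (η/2) * ‖θ - θhat‖^2 := by
    intro θ
    rw [hRμ, hRadv, hRreal]
    simp only
    have h1 : θ - θadv = (θ - θhat) + (1-μ) • (θreal - θadv) := by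
      rw [hθhat]; module
    have h2 : θ - θreal = (θ - θhat) + (-μ) • (θreal - θadv) := by
      rw [hθhat]; module
    have h3 : θhat - θadv = (1-μ) • (θreal - θadv) := by rw [hθhat]; module
    have h4 : θhat - θreal = (-μ) • (θreal - θadv) := by rw [hθhat]; module
    have e : ∀ (x : F) (c : ℝ), ‖x + c • (θreal - θadv)‖^2
        = ‖x‖^2 + 2*c*(inner ℝ x (θreal - θadv)) + c^2*‖θreal-θadv‖^2 := by
      intro x c
      rw [norm_add_sq_real, real_inner_smul_right, norm_smul, mul_pow,
        Real.norm_eq_abs, sq_abs]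
      ring
    have h5 : ∀ c:ℝ, ‖c • (θreal-θadv)‖^2 = c^2*‖θreal-θadv‖^2 := by
      intro c; rw [norm_smul, mul_pow, Real.norm_eq_abs, sq_abs]
    rw [h1, h2, h3, h4, e, e, h5, h5]
    ring
  refine ⟨hlmem, hΘl, ⟨⟨l, hlmem, by simp only; rw [hΘl]⟩, ?_⟩⟩
  rintro x ⟨t, ht, rfl⟩
  simp only
  rw [key (Θ t)]
  nlinarith [sq_nonneg ‖Θ t - θhat‖]
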